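/- Let E be a Hausdorff locally convex real topological vector space and let A ⊆ E be closed, convex, and contain 0. Then the Minkowski gauge of A equals the support function of the polar of A: for every x ∈ E, 𝒟_A(x) = sup {f(x) : f ∈ A°}, where A° = {f : E → ℝ continuous linear | f(a) ≤ 1 for all a ∈ A} and both sides are understood as elements of [0,∞]. -/

import Mathlib

open ENNReal

/-- The Minkowski gauge of a set `A` in a real vector space, with values in `[0,∞]`
(the infimum of the empty set being `∞`). -/
noncomputable def mgauge {E : Type*} [AddCommGroup E] [Module ℝ E] (A : Set E) (x : E) : ℝ≥0∞ :=
  sInf {r : ℝ≥0∞ | ∃ m : ℝ, 0 < m ∧ m⁻¹ • x ∈ A ∧ r = ENNReal.ofReal m}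

/-- Dual representation: for a closed convex set containing the origin, the Minkowski gauge
equals the support function of the polar set
`A° = {f : E →L[ℝ] ℝ | f a ≤ 1 for all a ∈ A}`. -/
theorem stmt_19 {E : Type*} [TopologicalSpace E] [AddCommGroup E] [Module ℝ E]
    [IsTopologicalAddGroup E] [ContinuousSMul ℝ E] [LocallyConvexSpace ℝ E] [T2Space E]
    (A : Set E) (hA : IsClosed A) (hconv : Convex ℝ A) (h0 : (0 : E) ∈ A) (x : E) :
    mgauge A x = ⨆ f : E →L[ℝ] ℝ, ⨆ _ : ∀ a ∈ A, f a ≤ 1, ENNReal.ofReal (f x) := by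
  apply le_antisymm
  · -- mgauge ≤ sup
    by_contra h
    push_neg at h
    set S := ⨆ f : E →L[ℝ] ℝ, ⨆ _ : ∀ a ∈ A, f a ≤ 1, ENNReal.ofReal (f x) with hS
    obtain ⟨m, hm0, hSm, hmg⟩ := (ENNReal.lt_iff_exists_real_btwn).1 h
    have hmpos : 0 < m := by
      rcases lt_or_ge 0 m with h' | h'
      · exact h'
      · exfalso
        have : ENNReal.ofReal m = 0 := ENNReal.ofReal_eq_zero.2 h'
        rw [this] at hSm
        exact (not_lt_of_ge zero_le) hSm
    -- m⁻¹ • x ∉ A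
    have hnot : m⁻¹ • x ∉ A := by
      intro hmem
      have : mgauge A x ≤ ENNReal.ofReal m := sInf_le ⟨m, hmpos, hmem, rfl⟩
      exact absurd (lt_of_le_of_lt this hmg) (lt_irrefl _)
    obtain ⟨f, u, hfA, hfx⟩ := geometric_hahn_banach_closed_point hconv hA hnot
    have hu : 0 < u := by simpa using hfA 0 h0
    set g : E →L[ℝ] ℝ := u⁻¹ • f with hg
    have hgA : ∀ a ∈ A, g a ≤ 1 := by
      intro a ha
      have := hfA a ha
      simp only [hg, ContinuousLinearMap.smul_apply, smul_eq_mul]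
      rw [inv_mul_le_iff₀ hu]
      linarith
    have hgx : m < g x := by
      have h1 : 1 < g (m⁻¹ • x) := by
        simp only [hg, ContinuousLinearMap.smul_apply, smul_eq_mul]
        rw [lt_inv_mul_iff₀ hu]
        linarith
      have : g (m⁻¹ • x) = m⁻¹ * g x := by simp
      rw [this, lt_inv_mul_iff₀ hmpos] at h1
      linarith
    have : ENNReal.ofReal m < S := by
      refine lt_of_lt_of_le (ENNReal.ofReal_lt_ofReal_iff (hmpos.trans hgx)|>.2 hgx) ?_
      exact le_iSup₂ (f := fun (f : E →L[ℝ] ℝ) (_ : ∀ a ∈ A, f a ≤ 1) => ENNReal.ofReal (f x)) g hgA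
    exact absurd (this.trans hSm) (lt_irrefl _)
  · -- sup ≤ mgauge
    refine iSup₂_le fun f hf => ?_
    refine le_sInf fun r hr => ?_
    obtain ⟨m, hm, hmem, rfl⟩ := hr
    refine ENNReal.ofReal_le_ofReal ?_
    have h1 : m⁻¹ * f x ≤ 1 := by simpa using hf _ hmem
    rw [inv_mul_le_iff₀ hm] at h1
    linarith
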